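/- Let T be a tree containing a strong support vertex v, let U be the set of leaves of T adjacent to v, let π be a pc-partition of T of maximum order PC(T), and let S be a part of π containing all support vertices of T. Then S ∩ U = ∅. -/

import Mathlib

namespace PCPaper

variable {V : Type*}

/-- `S` is a dominating set of `G`. -/
def IsDomSet (G : SimpleGraph V) (S : Set V) : Prop :=
  ∀ v : V, v ∈ S ∨ ∃ u ∈ S, G.Adj u v

/-- `S` is a paired dominating set of `G`: a dominating set such that the subgraph of `G`
induced by `S` contains a perfect matching (a matching whose vertex set is exactly `S`). -/
def IsPairedDomSet (G : SimpleGraph V) (S : Set V) : Prop :=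
  IsDomSet G S ∧ ∃ M : G.Subgraph, M.verts = S ∧ M.IsMatching

/-- Disjoint sets `A`, `B`, neither a paired dominating set, whose union is one. -/
def PairedCoalition (G : SimpleGraph V) (A B : Set V) : Prop :=
  Disjoint A B ∧ ¬ IsPairedDomSet G A ∧ ¬ IsPairedDomSet G B ∧ IsPairedDomSet G (A ∪ B)

variable [Fintype V] [DecidableEq V]

/-- `π` is a paired coalition partition of `G`: no part is a paired dominating set and every
part forms a paired coalition with some other part. -/
def IsPCPartition (G : SimpleGraph V) (π : Finpartition (Finset.univ : Finset V)) : Prop :=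
  ∀ A ∈ π.parts, ¬ IsPairedDomSet G (A : Set V) ∧
    ∃ B ∈ π.parts, B ≠ A ∧ PairedCoalition G (A : Set V) (B : Set V)

/-- The paired coalition number: the maximum number of parts of a pc-partition of `G`,
and `0` if `G` admits no pc-partition. -/
noncomputable def pcNumber (G : SimpleGraph V) : ℕ :=
  sSup {k | ∃ π : Finpartition (Finset.univ : Finset V), IsPCPartition G π ∧ π.parts.card = k}

/-- The paired coalition graph of a partition `π` of `G`: vertices are the parts of `π`,
two parts being adjacent iff they form a paired coalition in `G`. -/
def PCG (G : SimpleGraph V) (π : Finpartition (Finset.univ : Finset V)) :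
    SimpleGraph {A : Finset V // A ∈ π.parts} where
  Adj A B := PairedCoalition G ((A : Finset V) : Set V) ((B : Finset V) : Set V)
  symm := by
    refine ⟨?_⟩
    rintro A B ⟨h1, h2, h3, h4⟩
    exact ⟨h1.symm, h3, h2, by rwa [Set.union_comm]⟩
  loopless := by
    refine ⟨?_⟩
    rintro A ⟨h1, h2, h3, h4⟩
    exact h2 (by rwa [Set.union_self] at h4)

end PCPaper


lemma leaf_matched {V : Type*} [Fintype V] [DecidableEq V] (T : SimpleGraph V)
    [DecidableRel T.Adj] (M : T.Subgraph) (hM : M.IsMatching) {u v : V}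
    (hu : u ∈ M.verts) (hadj : T.Adj v u) (hdeg : T.degree u = 1) : M.Adj u v := by
  obtain ⟨w, hw, _⟩ := hM hu
  have hTw : T.Adj u w := M.adj_sub hw
  obtain ⟨a, ha⟩ := Finset.card_eq_one.mp (by rwa [SimpleGraph.degree] at hdeg)
  have h1 : w ∈ T.neighborFinset u := (SimpleGraph.mem_neighborFinset _ _ _).mpr hTw
  have h2 : v ∈ T.neighborFinset u := (SimpleGraph.mem_neighborFinset _ _ _).mpr hadj.symm
  rw [ha, Finset.mem_singleton] at h1 h2
  rwa [h1, ← h2] at hw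

lemma leaves_ne {V : Type*} [Fintype V] [DecidableEq V] (T : SimpleGraph V)
    [DecidableRel T.Adj] (M : T.Subgraph) (hM : M.IsMatching) {u u2 v : V}
    (h1 : M.Adj u v) (h2 : M.Adj u2 v) : u = u2 := by
  have hv : v ∈ M.verts := h1.snd_mem
  obtain ⟨w, hw, huniq⟩ := hM hv
  rw [huniq u h1.symm, huniq u2 h2.symm]

open PCPaper Finset in
/-- If `v` is a strong support vertex of a tree `T`, `π` a maximum pc-partition of `T`
and `S ∈ π` contains all support vertices, then `S` contains no leaf adjacent to `v`. -/
theorem stmt_10 {V : Type*} [Fintype V] [DecidableEq V] (T : SimpleGraph V)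
    [DecidableRel T.Adj] (hT : T.IsTree) (v : V)
    (hv : 2 ≤ (univ.filter fun u => T.Adj v u ∧ T.degree u = 1).card)
    (π : Finpartition (univ : Finset V)) (hπ : IsPCPartition T π)
    (hmax : π.parts.card = pcNumber T)
    (S : Finset V) (hS : S ∈ π.parts)
    (hsupp : ∀ w : V, (∃ u, T.Adj w u ∧ T.degree u = 1) → w ∈ S) :
    ∀ u : V, T.Adj v u → T.degree u = 1 → u ∉ S := by
  intro u hadj hdeg hu
  have hvS : v ∈ S := hsupp v ⟨u, hadj, hdeg⟩
  obtain ⟨u2, hu2mem, hne⟩ := Finset.exists_mem_ne hv u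
  rw [Finset.mem_filter] at hu2mem
  obtain ⟨-, hadj2, hdeg2⟩ := hu2mem
  by_cases h : u2 ∈ S
  · obtain ⟨-, B, hB, hBS, -, -, -, hPDS⟩ := hπ S hS
    obtain ⟨-, M, hMv, hM⟩ := hPDS
    have huM : u ∈ M.verts := by
      rw [hMv]; exact Or.inl (by exact_mod_cast hu)
    have hu2M : u2 ∈ M.verts := by
      rw [hMv]; exact Or.inl (by exact_mod_cast h)
    exact hne.symm (leaves_ne T M hM (leaf_matched T M hM huM hadj hdeg)
      (leaf_matched T M hM hu2M hadj2 hdeg2))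
  · obtain ⟨C, hC, hu2C⟩ := π.exists_mem (Finset.mem_univ u2)
    obtain ⟨-, B, hB, hBC, -, -, -, hPDS⟩ := hπ C hC
    obtain ⟨-, M, hMv, hM⟩ := hPDS
    have hu2M : u2 ∈ M.verts := by
      rw [hMv]; exact Or.inl (by exact_mod_cast hu2C)
    have hMadj2 : M.Adj u2 v := leaf_matched T M hM hu2M hadj2 hdeg2
    have hvM : v ∈ M.verts := hMadj2.snd_mem
    rw [hMv] at hvM
    have hBeq : B = S := by
      rcases hvM with hvC | hvB
      · exact absurd (π.eq_of_mem_parts hC hS (by exact_mod_cast hvC) hvS ▸ hu2C) h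
      · exact π.eq_of_mem_parts hB hS (by exact_mod_cast hvB) hvS
    have huM : u ∈ M.verts := by
      rw [hMv]; exact Or.inr (by rw [hBeq]; exact_mod_cast hu)
    exact hne.symm (leaves_ne T M hM (leaf_matched T M hM huM hadj hdeg) hMadj2)
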